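/- Let 0 ≤ p < q ≤ m be integers. The parametrized curve x = θ^m, y = θ^p(θ−1)^{q−p} (θ ∈ ℂ) has no singular local branches, and is nodal: there is no point through which three or more distinct parameter values pass, i.e., the system θ^m = θ_1^m = θ_2^m, θ^p(θ−1)^{q−p} = θ_1^p(θ_1−1)^{q−p} = θ_2^p(θ_2−1)^{q−p} has no solutions with θ, θ_1, θ_2 pairwise distinct. -/

import Mathlib

/-- Two circles with centers 0 and 1 meet in at most two points: three pairwise
distinct points cannot all have the same distance to 0 and the same distance to 1. -/
lemma three_points_two_circles (z₀ z₁ z₂ : ℂ)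
    (h01 : z₀ ≠ z₁) (h02 : z₀ ≠ z₂) (h12 : z₁ ≠ z₂)
    (ha : ‖z₀‖ = ‖z₁‖) (hb : ‖z₀‖ = ‖z₂‖)
    (hc : ‖z₀ - 1‖ = ‖z₁ - 1‖)
    (hd : ‖z₀ - 1‖ = ‖z₂ - 1‖) : False := by
  have n1 : Complex.normSq z₀ = Complex.normSq z₁ := by
    rw [← Complex.sq_norm, ← Complex.sq_norm, ha]
  have n2 : Complex.normSq z₀ = Complex.normSq z₂ := by
    rw [← Complex.sq_norm, ← Complex.sq_norm, hb]
  have n3 : Complex.normSq (z₀ - 1) = Complex.normSq (z₁ - 1) := by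
    rw [← Complex.sq_norm, ← Complex.sq_norm, hc]
  have n4 : Complex.normSq (z₀ - 1) = Complex.normSq (z₂ - 1) := by
    rw [← Complex.sq_norm, ← Complex.sq_norm, hd]
  simp only [Complex.normSq_apply, Complex.sub_re, Complex.sub_im, Complex.one_re,
    Complex.one_im, sub_zero] at n1 n2 n3 n4
  have hre1 : z₀.re = z₁.re := by nlinarith
  have hre2 : z₀.re = z₂.re := by nlinarith
  have him1 : z₀.im ^ 2 = z₁.im ^ 2 := by nlinarith
  have him2 : z₀.im ^ 2 = z₂.im ^ 2 := by nlinarith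
  rcases sq_eq_sq_iff_eq_or_eq_neg.mp him1 with h1 | h1
  · exact h01 (Complex.ext hre1 h1)
  · rcases sq_eq_sq_iff_eq_or_eq_neg.mp him2 with h2 | h2
    · exact h02 (Complex.ext hre2 h2)
    · refine h12 (Complex.ext (hre1 ▸ hre2 ▸ rfl) ?_)
      linarith [h1, h2]

/-- The parametrized curve θ ↦ (θ^m, θ^p(θ-1)^{q-p}) has no singular local
branches (the derivative of the first coordinate is nonzero for θ ≠ 0) and is nodal:
no three pairwise distinct parameter values map to the same point. -/
theorem rational_curve_is_nodal (m p q : ℕ) (hpq : p < q) (hqm : q ≤ m) :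
    (∀ θ : ℂ, θ ≠ 0 → deriv (fun t : ℂ => t ^ m) θ ≠ 0) ∧
    ∀ θ θ₁ θ₂ : ℂ, θ ≠ θ₁ → θ ≠ θ₂ → θ₁ ≠ θ₂ →
      ¬ (θ ^ m = θ₁ ^ m ∧ θ ^ m = θ₂ ^ m ∧
         θ ^ p * (θ - 1) ^ (q - p) = θ₁ ^ p * (θ₁ - 1) ^ (q - p) ∧
         θ ^ p * (θ - 1) ^ (q - p) = θ₂ ^ p * (θ₂ - 1) ^ (q - p)) := by
  have hm : m ≠ 0 := by omega
  have hr : q - p ≠ 0 := by omega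
  constructor
  · intro θ hθ
    rw [deriv_pow_field]
    exact mul_ne_zero (Nat.cast_ne_zero.mpr hm) (pow_ne_zero _ hθ)
  · rintro θ θ₁ θ₂ h01 h02 h12 ⟨e1, e2, e3, e4⟩
    have hθ0 : θ ≠ 0 := by
      rintro rfl
      rw [zero_pow hm] at e1 e2
      rw [(pow_eq_zero_iff hm).mp e1.symm, (pow_eq_zero_iff hm).mp e2.symm] at h12
      exact h12 rfl
    have habs : ‖θ‖ ≠ 0 := norm_ne_zero_iff.mpr hθ0
    -- equal moduli of θ's
    have ha : ‖θ‖ = ‖θ₁‖ := by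
      have := congrArg (‖·‖) e1
      rw [norm_pow, norm_pow] at this
      exact pow_left_inj₀ (norm_nonneg _) (norm_nonneg _) hm |>.mp this
    have hb : ‖θ‖ = ‖θ₂‖ := by
      have := congrArg (‖·‖) e2
      rw [norm_pow, norm_pow] at this
      exact pow_left_inj₀ (norm_nonneg _) (norm_nonneg _) hm |>.mp this
    -- equal moduli of (θ - 1)'s
    have key : ∀ w : ℂ, ‖θ‖ = ‖w‖ →
        θ ^ p * (θ - 1) ^ (q - p) = w ^ p * (w - 1) ^ (q - p) →
        ‖θ - 1‖ = ‖w - 1‖ := by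
      intro w hw he
      have := congrArg (‖·‖) he
      rw [norm_mul, norm_mul, norm_pow, norm_pow, norm_pow, norm_pow, ← hw] at this
      have h' : ‖θ - 1‖ ^ (q - p) = ‖w - 1‖ ^ (q - p) :=
        mul_left_cancel₀ (pow_ne_zero _ habs) this
      exact pow_left_inj₀ (norm_nonneg _) (norm_nonneg _) hr |>.mp h'
    exact three_points_two_circles θ θ₁ θ₂ h01 h02 h12 ha hb (key θ₁ ha e3) (key θ₂ hb e4)
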